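/- Let H be a finite-dimensional complex Hilbert space and X a permutationally invariant operator on H^{⊗N} (i.e., Π_σ X Π_σ† = X for every permutation σ of the N tensor factors). If Tr[X ρ^{⊗N}] = 0 for every density operator ρ on H, then X = 0. -/

import Mathlib

open Matrix BigOperators Finset
open scoped ComplexOrder

/-- N-fold tensor power of a matrix (operator on H^{⊗N} with H = ℂ^d). -/
def tensorPow {d N : ℕ} (ρ : Matrix (Fin d) (Fin d) ℂ) :
    Matrix (Fin N → Fin d) (Fin N → Fin d) ℂ :=
  Matrix.of fun f g => ∏ i, ρ (f i) (g i)

/-- Conjugation Π_σ X Π_σ† of an operator on H^{⊗N} by the unitary permuting tensor factors. -/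
def permAction {d N : ℕ} (σ : Equiv.Perm (Fin N))
    (X : Matrix (Fin N → Fin d) (Fin N → Fin d) ℂ) :
    Matrix (Fin N → Fin d) (Fin N → Fin d) ℂ :=
  Matrix.of fun f g => X (f ∘ σ) (g ∘ σ)

/-- Density operator: positive semidefinite with unit trace. -/
def IsDensity {d : ℕ} (ρ : Matrix (Fin d) (Fin d) ℂ) : Prop :=
  ρ.PosSemidef ∧ ρ.trace = 1

/-- A^{(k)} = I^{⊗(k-1)} ⊗ A ⊗ I^{⊗(N-k)}, the observable A acting on the k-th factor. -/
noncomputable def siteOp {d N : ℕ} (k : Fin N) (A : Matrix (Fin d) (Fin d) ℂ) :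
    Matrix (Fin N → Fin d) (Fin N → Fin d) ℂ :=
  Matrix.of fun f g => A (f k) (g k) * ∏ i ∈ Finset.univ.erase k, (if f i = g i then (1 : ℂ) else 0)

/-- Matrix element ⟨ψ₁|⊗⋯⊗⟨ψ_N| X |φ₁⟩⊗⋯⊗|φ_N⟩ on product vectors. -/
noncomputable def prodElem {d N : ℕ} (X : Matrix (Fin N → Fin d) (Fin N → Fin d) ℂ)
    (ψ φ : Fin N → Fin d → ℂ) : ℂ :=
  ∑ f : Fin N → Fin d, ∑ g : Fin N → Fin d,
    (starRingEnd ℂ) (∏ i, ψ i (f i)) * X f g * ∏ i, φ i (g i)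

namespace PermInvAux

variable {d N : ℕ}

/-! ### Generalities on positive semidefinite matrices -/

lemma psd_diag_nonneg {ρ : Matrix (Fin d) (Fin d) ℂ} (hρ : ρ.PosSemidef) (i : Fin d) :
    0 ≤ ρ i i := by
  have := hρ.dotProduct_mulVec_nonneg (Pi.single i 1)
  simpa [Matrix.mulVec_single, dotProduct, Pi.single_apply,
    apply_ite (star : ℂ → ℂ)] using this

lemma psd_trace_nonneg {ρ : Matrix (Fin d) (Fin d) ℂ} (hρ : ρ.PosSemidef) :
    0 ≤ ρ.trace :=
  Finset.sum_nonneg fun i _ => psd_diag_nonneg hρ i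

lemma psd_trace_zero {ρ : Matrix (Fin d) (Fin d) ℂ} (hρ : ρ.PosSemidef)
    (h : ρ.trace = 0) : ρ = 0 := by
  have hdiag : ∀ i, ρ i i = 0 := by
    have := (Finset.sum_eq_zero_iff_of_nonneg
      (fun i _ => psd_diag_nonneg hρ i)).mp h
    intro i; exact this i (Finset.mem_univ i)
  ext i j
  have hcol : ρ *ᵥ Pi.single j 1 = 0 := by
    rw [← (hρ.dotProduct_mulVec_zero_iff (Pi.single j 1))]
    simp [Matrix.mulVec_single, dotProduct, Pi.single_apply,
      apply_ite (star : ℂ → ℂ), hdiag]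
  have := congrFun hcol i
  simpa [Matrix.mulVec_single] using this

lemma psd_smul_real {ρ : Matrix (Fin d) (Fin d) ℂ} (hρ : ρ.PosSemidef)
    {t : ℝ} (ht : 0 ≤ t) : ((t : ℂ) • ρ).PosSemidef := by
  refine Matrix.PosSemidef.of_dotProduct_mulVec_nonneg ?_ ?_
  · unfold Matrix.IsHermitian
    rw [Matrix.conjTranspose_smul, hρ.1]
    congr 1
    simp
  · intro x
    rw [Matrix.smul_mulVec, dotProduct_smul]
    exact mul_nonneg (by exact_mod_cast Complex.zero_le_real.mpr ht) (hρ.dotProduct_mulVec_nonneg x)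

/-! ### Rank-one matrices and their span -/

/-- rank one matrix `v v^*`. -/
noncomputable def rankOne (v : Fin d → ℂ) : Matrix (Fin d) (Fin d) ℂ :=
  Matrix.of fun i j => v i * star (v j)

lemma rankOne_posSemidef (v : Fin d → ℂ) : (rankOne v).PosSemidef := by
  refine Matrix.PosSemidef.of_dotProduct_mulVec_nonneg ?_ ?_
  · ext i j
    simp [rankOne, Matrix.conjTranspose_apply, mul_comm]
  · intro x
    have : star x ⬝ᵥ (rankOne v) *ᵥ x
        = star (∑ j, star (v j) * x j) * (∑ j, star (v j) * x j) := by
      simp only [dotProduct, Matrix.mulVec, rankOne, Matrix.of_apply,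
        Finset.mul_sum, Finset.sum_mul, star_sum, StarMul.star_mul, star_star]
      rw [Finset.sum_comm]
      refine Finset.sum_congr rfl fun i _ => Finset.sum_congr rfl fun j _ => ?_
      simp only [Pi.star_apply]; ring
    rw [this]
    exact star_mul_self_nonneg _

lemma I3 : Complex.I ^ 3 = -Complex.I := by rw [pow_succ, Complex.I_sq]; ring
lemma I4 : Complex.I ^ 4 = 1 := Complex.I_pow_four
lemma I5 : Complex.I ^ 5 = Complex.I := by rw [pow_succ, I4, one_mul]
lemma I6 : Complex.I ^ 6 = -1 := by rw [pow_succ, I5, Complex.I_mul_I]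

set_option maxRecDepth 10000 in
lemma stdBasisMatrix_mem_span (a b : Fin d) :
    Matrix.single a b (1 : ℂ) ∈ Submodule.span ℂ (Set.range (rankOne (d := d))) := by
  have key : Matrix.single a b (1 : ℂ)
      = (4 : ℂ)⁻¹ • ∑ m : Fin 4, (Complex.I ^ (m : ℕ)) •
          rankOne (fun i => (if i = a then 1 else 0) + Complex.I ^ (m : ℕ) * (if i = b then 1 else 0)) := by
    ext i j
    have e0 : ((0 : Fin 4) : ℕ) = 0 := rfl
    have e1 : ((1 : Fin 4) : ℕ) = 1 := rfl
    have e2 : ((2 : Fin 4) : ℕ) = 2 := rfl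
    have e3 : ((3 : Fin 4) : ℕ) = 3 := rfl
    simp only [Matrix.smul_apply, Matrix.sum_apply, rankOne, Matrix.of_apply,
      Matrix.single, star_add, star_mul', star_pow, Complex.star_def,
      Complex.conj_I, apply_ite (starRingEnd ℂ), _root_.map_one, map_zero,
      Fin.sum_univ_four, e0, e1, e2, e3, pow_zero, pow_one, Complex.I_sq, I3,
      smul_eq_mul]
    split_ifs <;> simp_all <;> split_ifs <;>
      first
        | tauto
        | (ring_nf; all_goals simp only [I3, I4, I5, I6, Complex.I_sq]; all_goals ring)
  rw [key]
  exact Submodule.smul_mem _ _ (Submodule.sum_mem _ fun m _ =>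
    Submodule.smul_mem _ _ (Submodule.subset_span ⟨_, rfl⟩))

lemma matrix_mem_span (A : Matrix (Fin d) (Fin d) ℂ) :
    A ∈ Submodule.span ℂ (Set.range (rankOne (d := d))) := by
  rw [Matrix.matrix_eq_sum_single A]
  refine Submodule.sum_mem _ fun i _ => Submodule.sum_mem _ fun j _ => ?_
  have : Matrix.single i j (A i j) = (A i j) • Matrix.single i j (1 : ℂ) := by
    rw [Matrix.smul_single, smul_eq_mul, mul_one]
  rw [this]
  exact Submodule.smul_mem _ _ (stdBasisMatrix_mem_span i j)

/-! ### The multilinear functional `Fm X ρ = Tr[X (ρ₁ ⊗ ⋯ ⊗ ρ_N)]` -/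

noncomputable def Fm (X : Matrix (Fin N → Fin d) (Fin N → Fin d) ℂ)
    (ρ : Fin N → Matrix (Fin d) (Fin d) ℂ) : ℂ :=
  ∑ f : Fin N → Fin d, ∑ g : Fin N → Fin d, X f g * ∏ i, ρ i (g i) (f i)

lemma trace_eq (X : Matrix (Fin N → Fin d) (Fin N → Fin d) ℂ)
    (ρ : Matrix (Fin d) (Fin d) ℂ) :
    (X * tensorPow ρ).trace = Fm X (fun _ => ρ) := by
  simp [Matrix.trace, Matrix.mul_apply, tensorPow, Fm, Matrix.diag]

lemma hinv_apply {X : Matrix (Fin N → Fin d) (Fin N → Fin d) ℂ}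
    (hinv : ∀ σ : Equiv.Perm (Fin N), permAction σ X = X)
    (σ : Equiv.Perm (Fin N)) (f g : Fin N → Fin d) :
    X (f ∘ σ) (g ∘ σ) = X f g := by
  conv_rhs => rw [← hinv σ]
  rfl

lemma Fm_perm {X : Matrix (Fin N → Fin d) (Fin N → Fin d) ℂ}
    (hinv : ∀ σ : Equiv.Perm (Fin N), permAction σ X = X)
    (σ : Equiv.Perm (Fin N)) (ρ : Fin N → Matrix (Fin d) (Fin d) ℂ) :
    Fm X (ρ ∘ σ) = Fm X ρ := by
  classical
  unfold Fm
  let e : (Fin N → Fin d) ≃ (Fin N → Fin d) :=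
    ⟨fun f => f ∘ σ, fun f => f ∘ σ.symm, fun f => by ext i; simp, fun f => by ext i; simp⟩
  rw [← Equiv.sum_comp e (fun f => ∑ g : Fin N → Fin d, X f g * ∏ i, (ρ ∘ σ) i (g i) (f i))]
  refine Finset.sum_congr rfl fun f _ => ?_
  rw [← Equiv.sum_comp e (fun g => X (e f) g * ∏ i, (ρ ∘ σ) i (g i) ((e f) i))]
  refine Finset.sum_congr rfl fun g _ => ?_
  show X (f ∘ σ) (g ∘ σ) * ∏ i, ρ (σ i) (g (σ i)) (f (σ i)) = X f g * ∏ i, ρ i (g i) (f i)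
  rw [hinv_apply hinv, ← Equiv.prod_comp σ (fun i => ρ i (g i) (f i))]

lemma Fm_zero_slot (X : Matrix (Fin N → Fin d) (Fin N → Fin d) ℂ)
    (ρ : Fin N → Matrix (Fin d) (Fin d) ℂ) (i0 : Fin N) (h0 : ρ i0 = 0) :
    Fm X ρ = 0 := by
  unfold Fm
  refine Finset.sum_eq_zero fun f _ => Finset.sum_eq_zero fun g _ => ?_
  rw [Finset.prod_eq_zero (Finset.mem_univ i0) (by simp [h0]), mul_zero]

lemma Fm_smul_diag (X : Matrix (Fin N → Fin d) (Fin N → Fin d) ℂ)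
    (c : ℂ) (ρ : Matrix (Fin d) (Fin d) ℂ) :
    Fm X (fun _ => c • ρ) = c ^ N * Fm X (fun _ => ρ) := by
  unfold Fm
  rw [Finset.mul_sum]
  refine Finset.sum_congr rfl fun f _ => ?_
  rw [Finset.mul_sum]
  refine Finset.sum_congr rfl fun g _ => ?_
  simp only [Matrix.smul_apply, smul_eq_mul, Finset.prod_mul_distrib,
    Finset.prod_const, Finset.card_univ, Fintype.card_fin]
  ring

lemma Fm_expand (X : Matrix (Fin N → Fin d) (Fin N → Fin d) ℂ)
    (ρ : Fin N → Matrix (Fin d) (Fin d) ℂ) (τ σm : Matrix (Fin d) (Fin d) ℂ)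
    (T : Finset (Fin N)) (t : ℂ) :
    Fm X (fun i => if i ∈ T then τ + t • σm else ρ i)
      = ∑ S ∈ T.powerset, t ^ S.card *
          Fm X (fun i => if i ∈ S then σm else if i ∈ T then τ else ρ i) := by
  classical
  unfold Fm
  conv_rhs => simp only [Finset.mul_sum]
  conv_rhs => rw [Finset.sum_comm]
  refine Finset.sum_congr rfl fun f _ => ?_
  conv_rhs => rw [Finset.sum_comm]
  refine Finset.sum_congr rfl fun g _ => ?_
  have key : (∏ i, (if i ∈ T then τ + t • σm else ρ i) (g i) (f i))
      = ∑ S ∈ T.powerset, t ^ S.card *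
          ∏ i, (if i ∈ S then σm else if i ∈ T then τ else ρ i) (g i) (f i) := by
    rw [← Finset.prod_mul_prod_compl T
      (fun i => (if i ∈ T then τ + t • σm else ρ i) (g i) (f i))]
    have hT : (∏ i ∈ T, (if i ∈ T then τ + t • σm else ρ i) (g i) (f i))
        = ∏ i ∈ T, (t * σm (g i) (f i) + τ (g i) (f i)) :=
      Finset.prod_congr rfl fun i hi => by simp [hi]; ring
    have hTc : (∏ i ∈ Tᶜ, (if i ∈ T then τ + t • σm else ρ i) (g i) (f i))
        = ∏ i ∈ Tᶜ, ρ i (g i) (f i) :=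
      Finset.prod_congr rfl fun i hi => by
        rw [Finset.mem_compl] at hi; simp [hi]
    rw [hT, hTc, Finset.prod_add, Finset.sum_mul]
    refine Finset.sum_congr rfl fun S hS => ?_
    rw [Finset.mem_powerset] at hS
    have h1 : (∏ i ∈ S, t * σm (g i) (f i)) = t ^ S.card * ∏ i ∈ S, σm (g i) (f i) := by
      rw [Finset.prod_mul_distrib, Finset.prod_const]
    have h2 : (∏ i, (if i ∈ S then σm else if i ∈ T then τ else ρ i) (g i) (f i))
        = ((∏ i ∈ S, σm (g i) (f i)) * ∏ i ∈ T \ S, τ (g i) (f i))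
            * ∏ i ∈ Tᶜ, ρ i (g i) (f i) := by
      rw [← Finset.prod_mul_prod_compl T
        (fun i => (if i ∈ S then σm else if i ∈ T then τ else ρ i) (g i) (f i))]
      congr 1
      · rw [← Finset.prod_sdiff hS, mul_comm]
        congr 1
        · exact Finset.prod_congr rfl fun i hi => by simp [hi]
        · exact Finset.prod_congr rfl fun i hi => by
            simp [(Finset.mem_sdiff.mp hi).2, (Finset.mem_sdiff.mp hi).1]
      · refine Finset.prod_congr rfl fun i hi => ?_
        rw [Finset.mem_compl] at hi
        have hiS : i ∉ S := fun h => hi (hS h)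
        simp [hiS, hi]
    rw [h2, h1]
    ring
  rw [key, Finset.mul_sum]
  refine Finset.sum_congr rfl fun S _ => ?_
  ring

lemma coeff_one_vanish {T : Finset (Fin N)} (c : Finset (Fin N) → ℂ)
    (H : ∀ t : ℝ, 0 ≤ t → ∑ S ∈ T.powerset, (t : ℂ) ^ S.card * c S = 0) :
    ∑ S ∈ T.powerset.filter (fun S => S.card = 1), c S = 0 := by
  classical
  set p : Polynomial ℂ := ∑ S ∈ T.powerset, Polynomial.C (c S) * Polynomial.X ^ S.card with hpdef
  have heval : ∀ t : ℂ, p.eval t = ∑ S ∈ T.powerset, t ^ S.card * c S := by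
    intro t
    rw [hpdef, Polynomial.eval_finset_sum]
    exact Finset.sum_congr rfl fun S _ => by
      rw [Polynomial.eval_mul, Polynomial.eval_C, Polynomial.eval_pow, Polynomial.eval_X]; ring
  have hp0 : p = 0 := by
    refine p.eq_zero_of_infinite_isRoot ?_
    have h1 : Set.MapsTo (fun t : ℝ => (t : ℂ)) (Set.Ici (0:ℝ)) {x | p.IsRoot x} := by
      intro t ht
      simp only [Set.mem_setOf_eq, Polynomial.IsRoot]
      rw [heval]
      exact H t ht
    have h2 : (Set.Ici (0:ℝ)).Infinite := Set.Ici_infinite 0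
    exact Set.Infinite.mono (Set.image_subset_iff.mpr h1)
      (h2.image (Complex.ofReal_injective.injOn))
  have hcoeff : p.coeff 1 = ∑ S ∈ T.powerset.filter (fun S => S.card = 1), c S := by
    rw [hpdef, Polynomial.finset_sum_coeff, Finset.sum_filter]
    refine Finset.sum_congr rfl fun S _ => ?_
    rw [Polynomial.coeff_C_mul, Polynomial.coeff_X_pow]
    by_cases hc : S.card = 1 <;> simp [hc, eq_comm]
  rw [← hcoeff, hp0, Polynomial.coeff_zero]

lemma Fm_update (X : Matrix (Fin N → Fin d) (Fin N → Fin d) ℂ)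
    (ρ : Fin N → Matrix (Fin d) (Fin d) ℂ) (i0 : Fin N) (A : Matrix (Fin d) (Fin d) ℂ) :
    Fm X (Function.update ρ i0 A)
      = ∑ f : Fin N → Fin d, ∑ g : Fin N → Fin d,
          X f g * (A (g i0) (f i0) * ∏ i ∈ Finset.univ.erase i0, ρ i (g i) (f i)) := by
  classical
  unfold Fm
  refine Finset.sum_congr rfl fun f _ => Finset.sum_congr rfl fun g _ => ?_
  congr 1
  rw [← Finset.mul_prod_erase Finset.univ _ (Finset.mem_univ i0)]
  congr 1
  · simp
  · exact Finset.prod_congr rfl fun i hi => by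
      rw [Function.update_of_ne (Finset.mem_erase.mp hi).1]

/-- Linearity of `Fm` in one slot, as a linear map. -/
noncomputable def FmSlot (X : Matrix (Fin N → Fin d) (Fin N → Fin d) ℂ)
    (ρ : Fin N → Matrix (Fin d) (Fin d) ℂ) (i0 : Fin N) :
    Matrix (Fin d) (Fin d) ℂ →ₗ[ℂ] ℂ where
  toFun A := Fm X (Function.update ρ i0 A)
  map_add' A B := by
    simp only [Fm_update, Matrix.add_apply]
    rw [← Finset.sum_add_distrib]
    refine Finset.sum_congr rfl fun f _ => ?_
    rw [← Finset.sum_add_distrib]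
    exact Finset.sum_congr rfl fun g _ => by ring
  map_smul' c A := by
    simp only [Fm_update, Matrix.smul_apply, smul_eq_mul, RingHom.id_apply]
    rw [Finset.mul_sum]
    refine Finset.sum_congr rfl fun f _ => ?_
    rw [Finset.mul_sum]
    exact Finset.sum_congr rfl fun g _ => by ring

lemma Fm_std (X : Matrix (Fin N → Fin d) (Fin N → Fin d) ℂ) (f g : Fin N → Fin d) :
    Fm X (fun i => Matrix.single (g i) (f i) (1 : ℂ)) = X f g := by
  classical
  have hprod : ∀ f' g' : Fin N → Fin d,
      (∏ i, Matrix.single (g i) (f i) (1 : ℂ) (g' i) (f' i))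
        = if f' = f ∧ g' = g then 1 else 0 := by
    intro f' g'
    by_cases h : f' = f ∧ g' = g
    · rw [if_pos h, h.1, h.2]
      refine Finset.prod_eq_one fun i _ => by simp [Matrix.single]
    · rw [if_neg h]
      obtain ⟨i0, hi0⟩ : ∃ i, ¬(g i = g' i ∧ f i = f' i) := by
        by_contra hc
        push_neg at hc
        exact h ⟨funext fun i => ((hc i).2).symm, funext fun i => ((hc i).1).symm⟩
      exact Finset.prod_eq_zero (Finset.mem_univ i0)
        (by simp only [Matrix.single, Matrix.of_apply]; rw [if_neg hi0])
  unfold Fm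
  calc (∑ f' : Fin N → Fin d, ∑ g' : Fin N → Fin d,
          X f' g' * ∏ i, Matrix.single (g i) (f i) (1 : ℂ) (g' i) (f' i))
      = ∑ f' : Fin N → Fin d, ∑ g' : Fin N → Fin d,
          (if f' = f then (1 : ℂ) else 0) * (if g' = g then X f' g' else 0) := by
        refine Finset.sum_congr rfl fun f' _ => Finset.sum_congr rfl fun g' _ => ?_
        rw [hprod]
        by_cases h1 : f' = f <;> by_cases h2 : g' = g <;> simp [h1, h2]
    _ = X f g := by
        have hinner : ∀ f' : Fin N → Fin d,
            (∑ g' : Fin N → Fin d, if g' = g then X f' g' else 0) = X f' g := by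
          intro f'
          rw [Finset.sum_ite_eq' Finset.univ g (fun g' => X f' g')]
          simp
        rw [Finset.sum_congr rfl (fun f' _ => by rw [← Finset.mul_sum, hinner f'])]
        simp only [ite_mul, one_mul, zero_mul]
        rw [Finset.sum_ite_eq' Finset.univ f (fun f' => X f' g)]
        simp

end PermInvAux

open PermInvAux in
/-- A permutationally invariant operator on H^{⊗N} with vanishing
ensemble averages Tr[X ρ^{⊗N}] on all density operators ρ is zero. -/
theorem perm_invariant_determined_by_averages
    {d N : ℕ} (hN : 0 < N)
    (X : Matrix (Fin N → Fin d) (Fin N → Fin d) ℂ)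
    (hinv : ∀ σ : Equiv.Perm (Fin N), permAction σ X = X)
    (h : ∀ ρ : Matrix (Fin d) (Fin d) ℂ, IsDensity ρ → (X * tensorPow ρ).trace = 0) :
    X = 0 := by
  classical
  -- Step 1: diagonal vanishing on all PSD matrices
  have hdiag : ∀ ρ : Matrix (Fin d) (Fin d) ℂ, ρ.PosSemidef → Fm X (fun _ => ρ) = 0 := by
    intro ρ hρ
    by_cases h0 : ρ = 0
    · exact Fm_zero_slot X _ ⟨0, hN⟩ (by simp [h0])
    · have htr : ρ.trace ≠ 0 := fun hc => h0 (psd_trace_zero hρ hc)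
      obtain ⟨hre, him⟩ := Complex.nonneg_iff.mp (psd_trace_nonneg hρ)
      set t : ℝ := ρ.trace.re with htdef
      have htr' : ρ.trace = (t : ℂ) := by
        apply Complex.ext <;> simp [htdef, ← him]
      have ht0 : t ≠ 0 := by
        intro hc; exact htr (by rw [htr', hc, Complex.ofReal_zero])
      have hρ' : IsDensity (((t⁻¹ : ℝ) : ℂ) • ρ) := by
        constructor
        · exact psd_smul_real hρ (inv_nonneg.mpr hre)
        · rw [Matrix.trace_smul, htr', smul_eq_mul]
          rw [← Complex.ofReal_mul, inv_mul_cancel₀ ht0, Complex.ofReal_one]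
      have hz := h _ hρ'
      rw [trace_eq] at hz
      have hscale := Fm_smul_diag X ((t : ℂ)) (((t⁻¹ : ℝ) : ℂ) • ρ)
      rw [hz, mul_zero] at hscale
      have : ((t : ℂ)) • (((t⁻¹ : ℝ) : ℂ) • ρ) = ρ := by
        rw [smul_smul, ← Complex.ofReal_mul, mul_inv_cancel₀ ht0, Complex.ofReal_one, one_smul]
      rwa [this] at hscale
  -- Step 2: vanishing on all PSD tuples (symmetrization + polarization)
  have P : ∀ k : ℕ, ∀ ρ : Fin N → Matrix (Fin d) (Fin d) ℂ,
      (∀ i, (ρ i).PosSemidef) →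
      (∀ i j : Fin N, k ≤ (i : ℕ) → k ≤ (j : ℕ) → ρ i = ρ j) → Fm X ρ = 0 := by
    intro k
    induction k with
    | zero =>
      intro ρ hpsd heq
      have hconst : ρ = fun _ => ρ ⟨0, hN⟩ :=
        funext fun i => heq i ⟨0, hN⟩ (Nat.zero_le _) (Nat.zero_le _)
      rw [hconst]
      exact hdiag _ (hpsd _)
    | succ k IH =>
      intro ρ hpsd heq
      by_cases hk : k < N
      · set i0 : Fin N := ⟨k, hk⟩ with hi0def
        set T : Finset (Fin N) := Finset.univ.filter (fun i => k ≤ (i : ℕ)) with hTdef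
        have hi0T : i0 ∈ T := by simp [hTdef, hi0def]
        set τ : Matrix (Fin d) (Fin d) ℂ :=
          if hk1 : k + 1 < N then ρ ⟨k + 1, hk1⟩ else 0 with hτdef
        have hτpsd : τ.PosSemidef := by
          rw [hτdef]
          split_ifs with h'
          · exact hpsd _
          · exact Matrix.PosSemidef.zero
        have hτval : ∀ i : Fin N, k + 1 ≤ (i : ℕ) → ρ i = τ := by
          intro i hi
          have hk1 : k + 1 < N := lt_of_le_of_lt hi i.isLt
          rw [hτdef, dif_pos hk1]
          exact heq i ⟨k + 1, hk1⟩ (by omega) (by simp)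
        -- the one-parameter curve of PSD tuples
        have hcurve : ∀ t : ℝ, 0 ≤ t →
            Fm X (fun i => if i ∈ T then τ + (t : ℂ) • (ρ i0) else ρ i) = 0 := by
          intro t ht
          refine IH _ (fun i => ?_) (fun i j hi hj => ?_)
          · by_cases hiT : i ∈ T
            · simp only [hiT, if_true]
              exact hτpsd.add (psd_smul_real (hpsd i0) ht)
            · simp only [hiT, if_false]
              exact hpsd i
          · have hiT : i ∈ T := by simp [hTdef]; omega
            have hjT : j ∈ T := by simp [hTdef]; omega
            simp [hiT, hjT]
        -- coefficient extraction
        have hc := coeff_one_vanish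
          (fun S => Fm X (fun i => if i ∈ S then ρ i0 else if i ∈ T then τ else ρ i))
          (fun t ht => by rw [← Fm_expand]; exact hcurve t ht)
        have himage : T.powerset.filter (fun S => S.card = 1)
            = T.image (fun a => ({a} : Finset (Fin N))) := by
          ext S
          simp only [Finset.mem_filter, Finset.mem_powerset, Finset.card_eq_one,
            Finset.mem_image]
          constructor
          · rintro ⟨hsub, a, rfl⟩
            exact ⟨a, hsub (Finset.mem_singleton_self a), rfl⟩
          · rintro ⟨a, ha, rfl⟩
            exact ⟨Finset.singleton_subset_iff.mpr ha, a, rfl⟩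
        rw [himage, Finset.sum_image
          (fun x _ y _ hxy => Finset.singleton_injective hxy)] at hc
        -- symmetry: all singleton coefficients agree
        have hsym : ∀ a ∈ T,
            Fm X (fun i => if i ∈ ({a} : Finset (Fin N)) then ρ i0 else if i ∈ T then τ else ρ i)
              = Fm X (fun i => if i ∈ ({i0} : Finset (Fin N)) then ρ i0
                  else if i ∈ T then τ else ρ i) := by
          intro a ha
          have hfun : (fun i => if i ∈ ({a} : Finset (Fin N)) then ρ i0
                else if i ∈ T then τ else ρ i)
              = (fun i => if i ∈ ({i0} : Finset (Fin N)) then ρ i0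
                  else if i ∈ T then τ else ρ i) ∘ (Equiv.swap a i0) := by
            funext i
            simp only [Function.comp_apply, Finset.mem_singleton]
            by_cases h1 : i = a
            · subst h1
              simp [Equiv.swap_apply_left]
            · by_cases h2 : i = i0
              · subst h2
                have hne : ¬ a = i0 := fun hc => h1 hc.symm
                simp [Equiv.swap_apply_right, h1, hne, hi0T, ha]
              · rw [Equiv.swap_apply_of_ne_of_ne h1 h2, if_neg h1, if_neg h2]
          rw [hfun]
          exact Fm_perm hinv _ _
        rw [Finset.sum_congr rfl hsym, Finset.sum_const, nsmul_eq_mul] at hc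
        -- identify the singleton coefficient with Fm X ρ
        have hρeq : (fun i => if i ∈ ({i0} : Finset (Fin N)) then ρ i0
            else if i ∈ T then τ else ρ i) = ρ := by
          funext i
          simp only [Finset.mem_singleton]
          by_cases h1 : i = i0
          · rw [if_pos h1, h1]
          · rw [if_neg h1]
            by_cases h2 : i ∈ T
            · have hki : k ≤ (i : ℕ) := by
                have := Finset.mem_filter.mp h2
                exact this.2
              have hk1i : k + 1 ≤ (i : ℕ) := by
                rcases Nat.lt_or_ge (i : ℕ) (k + 1) with hlt | hge
                · exfalso
                  refine h1 (Fin.ext ?_)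
                  have hval : (i0 : ℕ) = k := rfl
                  omega
                · exact hge
              rw [if_pos h2, ← hτval i hk1i]
            · rw [if_neg h2]
        rw [hρeq] at hc
        have hTcard : (T.card : ℂ) ≠ 0 := by
          simp only [ne_eq, Nat.cast_eq_zero, Finset.card_eq_zero]
          exact fun hc' => by rw [hc'] at hi0T; exact absurd hi0T (Finset.notMem_empty i0)
        exact (mul_eq_zero.mp hc).resolve_left hTcard
      · exact IH ρ hpsd (fun i j hi hj => absurd i.isLt (by omega))
  have hPSD : ∀ ρ : Fin N → Matrix (Fin d) (Fin d) ℂ,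
      (∀ i, (ρ i).PosSemidef) → Fm X ρ = 0 :=
    fun ρ hρ => P N ρ hρ (fun i j hi hj => absurd i.isLt (by omega))
  -- Step 3: extend slot by slot to all tuples
  have Q : ∀ k : ℕ, ∀ ρ : Fin N → Matrix (Fin d) (Fin d) ℂ,
      (∀ i : Fin N, k ≤ (i : ℕ) → (ρ i).PosSemidef) → Fm X ρ = 0 := by
    intro k
    induction k with
    | zero => exact fun ρ hρ => hPSD ρ (fun i => hρ i (Nat.zero_le _))
    | succ k IH =>
      intro ρ hρ
      by_cases hk : k < N
      · set i0 : Fin N := ⟨k, hk⟩ with hi0def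
        have hker : Set.range (rankOne (d := d)) ⊆ ↑(LinearMap.ker (FmSlot X ρ i0)) := by
          rintro _ ⟨v, rfl⟩
          simp only [SetLike.mem_coe, LinearMap.mem_ker]
          show Fm X (Function.update ρ i0 (rankOne v)) = 0
          refine IH _ (fun i hi => ?_)
          by_cases hii : i = i0
          · rw [hii, Function.update_self]
            exact rankOne_posSemidef v
          · rw [Function.update_of_ne hii]
            refine hρ i ?_
            rcases Nat.lt_or_ge (i : ℕ) (k + 1) with hlt | hge
            · refine absurd (Fin.ext ?_ : i = i0) hii
              have hval : (i0 : ℕ) = k := rfl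
              omega
            · exact hge
        have hmem := matrix_mem_span (ρ i0)
        have : FmSlot X ρ i0 (ρ i0) = 0 := by
          have hle : Submodule.span ℂ (Set.range (rankOne (d := d)))
              ≤ LinearMap.ker (FmSlot X ρ i0) := Submodule.span_le.mpr hker
          exact LinearMap.mem_ker.mp (hle hmem)
        have heq : FmSlot X ρ i0 (ρ i0) = Fm X ρ := by
          show Fm X (Function.update ρ i0 (ρ i0)) = Fm X ρ
          rw [Function.update_eq_self]
        rw [← heq, this]
      · exact IH ρ (fun i hi => hρ i (by omega))
  have hall : ∀ ρ : Fin N → Matrix (Fin d) (Fin d) ℂ, Fm X ρ = 0 :=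
    fun ρ => Q N ρ (fun i hi => absurd i.isLt (by omega))
  -- Step 4: read off matrix entries
  ext f g
  have := hall (fun i => Matrix.single (g i) (f i) (1 : ℂ))
  rw [Fm_std] at this
  simpa using this
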